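/- For the universal polynomials U_s defined by U_1 = a^{(1)}_0 + b^{(1)}_0·x and U_n = (Σ_{i<n} a^{(n)}_i U_i)·(Σ_{i<n} b^{(n)}_i U_i), write U_s = Σ_i α_i^{(s)}(a,b) x^i where each coefficient α_i^{(s)} is a polynomial in the variables a, b. Then for all s ≥ 1 and all i, the total degree of α_i^{(s)} in the variables a, b is at most (i+1)·2^{2s}. -/

import Mathlib

/-- Names of the auxiliary variables `a⁽ʲ⁾ᵢ`, `b⁽ʲ⁾ᵢ` of the universal polynomials. -/
inductive AB where
  | a (j i : ℕ) : AB
  | b (j i : ℕ) : AB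

open Polynomial MvPolynomial in
/-- `Us n` is the list `[U_n, U_{n-1}, …, U_1]` of the universal polynomials,
viewed as univariate polynomials in `x` with coefficients in `ℤ[a,b]`.
`U_1 = a⁽¹⁾₀ + b⁽¹⁾₀·x` and
`U_n = (Σ_{i=1}^{n-1} a⁽ⁿ⁾ᵢ U_i)·(Σ_{i=1}^{n-1} b⁽ⁿ⁾ᵢ U_i)`. -/
noncomputable def Us : ℕ → List (Polynomial (MvPolynomial AB ℤ))
  | 0 => []
  | 1 => [Polynomial.C (MvPolynomial.X (AB.a 1 0)) +
          Polynomial.C (MvPolynomial.X (AB.b 1 0)) * Polynomial.X]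
  | (n + 2) =>
      let prev := Us (n + 1)
      ((((List.range (n + 1)).map (fun i =>
            Polynomial.C (MvPolynomial.X (AB.a (n + 2) (i + 1))) * prev.getD (n - i) 0)).sum) *
       (((List.range (n + 1)).map (fun i =>
            Polynomial.C (MvPolynomial.X (AB.b (n + 2) (i + 1))) * prev.getD (n - i) 0)).sum))
        :: prev

/-- The universal polynomial `U_n` (as a polynomial in `x` over `ℤ[a,b]`). -/
noncomputable def U (n : ℕ) : Polynomial (MvPolynomial AB ℤ) := (Us n).headD 0

lemma getD_Us : ∀ n k : ℕ, k < n → (Us n).getD k 0 = U (n - k)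
  | 0, k, h => absurd h (Nat.not_lt_zero k)
  | 1, 0, _ => rfl
  | 1, k+1, h => absurd h (by omega)
  | n+2, 0, _ => rfl
  | n+2, k+1, h => by
      show (Us (n+1)).getD k 0 = U (n + 2 - (k+1))
      rw [getD_Us (n+1) k (by omega)]
      congr 1
      omega

open Polynomial MvPolynomial in
lemma U_succ_succ (n : ℕ) :
    U (n + 2) =
      ((((List.range (n + 1)).map (fun i =>
            Polynomial.C (MvPolynomial.X (AB.a (n + 2) (i + 1))) * U (i + 1))).sum) *
       (((List.range (n + 1)).map (fun i =>
            Polynomial.C (MvPolynomial.X (AB.b (n + 2) (i + 1))) * U (i + 1))).sum)) := by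
  show ((Us (n+2)).headD 0) = _
  rw [Us]
  simp only [List.headD_cons]
  congr 1 <;>
  · congr 1
    refine List.map_congr_left (fun i hi => ?_)
    rw [List.mem_range] at hi
    rw [getD_Us (n+1) (n-i) (by omega)]
    congr 2
    omega

lemma totalDegree_list_sum_le (l : List (MvPolynomial AB ℤ)) (d : ℕ)
    (h : ∀ p ∈ l, p.totalDegree ≤ d) : l.sum.totalDegree ≤ d := by
  induction l with
  | nil => simp
  | cons p t ih =>
      rw [List.sum_cons]
      exact le_trans (MvPolynomial.totalDegree_add _ _)
        (max_le (h p (by simp)) (ih fun q hq => h q (by simp [hq])))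

open Polynomial MvPolynomial in
lemma factor_coeff_bound (n : ℕ) (v : ℕ → AB)
    (h : ∀ m, 1 ≤ m → m ≤ n + 1 → ∀ k, ((U m).coeff k).totalDegree ≤ (k + 1) * 2 ^ (2 * m))
    (k : ℕ) :
    ((((List.range (n + 1)).map (fun i =>
        Polynomial.C (MvPolynomial.X (v i)) * U (i + 1))).sum.coeff k)).totalDegree
      ≤ 1 + (k + 1) * 2 ^ (2 * (n + 1)) := by
  rw [Polynomial.coeff_list_sum]
  refine totalDegree_list_sum_le _ _ ?_
  intro p hp
  simp only [List.map_map, List.mem_map, List.mem_range, Function.comp] at hp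
  obtain ⟨i, hi, rfl⟩ := hp
  simp only [Polynomial.lcoeff_apply, Polynomial.coeff_C_mul]
  refine le_trans (MvPolynomial.totalDegree_mul _ _) ?_
  have h1 : (MvPolynomial.X (v i) : MvPolynomial AB ℤ).totalDegree = 1 :=
    MvPolynomial.totalDegree_X _
  have h2 := h (i + 1) (by omega) (by omega) k
  have h3 : (k + 1) * 2 ^ (2 * (i + 1)) ≤ (k + 1) * 2 ^ (2 * (n + 1)) := by
    exact Nat.mul_le_mul_left _ (Nat.pow_le_pow_right (by norm_num) (by omega))
  omega

theorem totalDegree_coeff_of_universal (s : ℕ) (hs : 1 ≤ s) (i : ℕ) :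
    ((U s).coeff i).totalDegree ≤ (i + 1) * 2 ^ (2 * s) := by
  induction s using Nat.strong_induction_on generalizing i with
  | _ s ih =>
    match s, hs with
    | 1, _ =>
      have hU : U 1 = Polynomial.C (MvPolynomial.X (AB.a 1 0)) +
          Polynomial.C (MvPolynomial.X (AB.b 1 0)) * Polynomial.X := rfl
      rw [hU]
      match i with
      | 0 =>
        simp only [Polynomial.coeff_add, Polynomial.coeff_C, Polynomial.coeff_C_mul,
          Polynomial.coeff_X_zero, if_pos rfl, mul_zero, add_zero]
        simp [MvPolynomial.totalDegree_X]
      | 1 =>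
        simp only [Polynomial.coeff_add, Polynomial.coeff_C, Polynomial.coeff_C_mul,
          Polynomial.coeff_X_one, if_neg one_ne_zero, mul_one, zero_add]
        simp [MvPolynomial.totalDegree_X]
      | (k + 2) =>
        simp [Polynomial.coeff_X]
    | (n + 2), _ =>
      rw [U_succ_succ, Polynomial.coeff_mul]
      refine MvPolynomial.totalDegree_finsetSum_le ?_
      rintro ⟨x, y⟩ hxy
      rw [Finset.HasAntidiagonal.mem_antidiagonal] at hxy
      refine le_trans (MvPolynomial.totalDegree_mul _ _) ?_
      have hh : ∀ m, 1 ≤ m → m ≤ n + 1 → ∀ k,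
          ((U m).coeff k).totalDegree ≤ (k + 1) * 2 ^ (2 * m) :=
        fun m hm1 hm2 k => ih m (by omega) hm1 k
      have ha := factor_coeff_bound n (fun i => AB.a (n + 2) (i + 1)) hh x
      have hb := factor_coeff_bound n (fun i => AB.b (n + 2) (i + 1)) hh y
      have hE : (4 : ℕ) ≤ 2 ^ (2 * (n + 1)) := by
        calc (4:ℕ) = 2^2 := by norm_num
        _ ≤ 2 ^ (2 * (n + 1)) := Nat.pow_le_pow_right (by norm_num) (by omega)
      have hpow : 2 ^ (2 * (n + 2)) = 4 * 2 ^ (2 * (n + 1)) := by ring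
      set E := 2 ^ (2 * (n + 1)) with hEdef
      rw [hpow]
      nlinarith [ha, hb, hE, hxy]
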